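/- arXiv:1909.07277 — 4 statements merged into one kernel-verified Lean document; each statement's English description precedes it below -/
import Mathlib

section
/- The Lehmer code Θ transforms the statistic des (number of descents) on S_n to the statistic asc (number of ascents) on inversion sequences: for every π ∈ S_n, des(π) = asc(Θ(π)). -/
def ascN (s : List ℕ) : ℕ :=
  ((Finset.range (s.length - 1)).filter fun i => s.getD i 0 < s.getD (i+1) 0).card

def repN (s : List ℕ) : ℕ := s.length - s.dedup.length

def zeroN (s : List ℕ) : ℕ :=
  ((Finset.range s.length).filter fun i => s.getD i 0 = 0).card

def maxN (s : List ℕ) : ℕ :=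
  ((Finset.range s.length).filter fun i => s.getD i 0 = i).card

def rminN (s : List ℕ) : ℕ :=
  ((Finset.range s.length).filter fun i =>
    ∀ j ∈ Finset.range s.length, i < j → s.getD i 0 < s.getD j 0).card

/-- `s` is an inversion sequence: 0-indexed, `s i ≤ i` (i.e. 1-indexed `0 ≤ s_i < i`). -/
def IsInvSeq (s : List ℕ) : Prop := ∀ i < s.length, s.getD i 0 ≤ i

/-- `s` is an ascent sequence. -/
def IsAscSeq (s : List ℕ) : Prop :=
  IsInvSeq s ∧ ∀ i < s.length, s.getD i 0 ≤ ascN (s.take i) + 1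

def AscSeqs (n : ℕ) : Set (List ℕ) := {s | IsAscSeq s ∧ s.length = n}

/-- The Lehmer code of a permutation of `Fin n`. -/
def lehmer {n : ℕ} (π : Equiv.Perm (Fin n)) : List ℕ :=
  List.ofFn fun i : Fin n => (Finset.univ.filter fun j : Fin n => j < i ∧ π i < π j).card

/-- The one-line word of a permutation, as a list of naturals. -/
def wordOf {n : ℕ} (π : Equiv.Perm (Fin n)) : List ℕ := List.ofFn fun i => (π i : ℕ)

def desN (l : List ℕ) : ℕ :=
  ((Finset.range (l.length - 1)).filter fun i => l.getD (i+1) 0 < l.getD i 0).card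

def lmaxN (l : List ℕ) : ℕ :=
  ((Finset.range l.length).filter fun i =>
    ∀ j ∈ Finset.range l.length, j < i → l.getD j 0 < l.getD i 0).card

def lminN (l : List ℕ) : ℕ :=
  ((Finset.range l.length).filter fun i =>
    ∀ j ∈ Finset.range l.length, j < i → l.getD i 0 < l.getD j 0).card

def rmaxN (l : List ℕ) : ℕ :=
  ((Finset.range l.length).filter fun i =>
    ∀ j ∈ Finset.range l.length, i < j → l.getD j 0 < l.getD i 0).card

lemma lehmer_key {n : ℕ} (π : Equiv.Perm (Fin n)) (a b : Fin n) (hab : (b : ℕ) = a + 1) :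
    (π b < π a ↔
      (Finset.univ.filter fun j : Fin n => j < a ∧ π a < π j).card <
      (Finset.univ.filter fun j : Fin n => j < b ∧ π b < π j).card) := by
  constructor
  · intro h
    have hnot : a ∉ (Finset.univ.filter fun j : Fin n => j < a ∧ π a < π j) := by simp
    have hsub : insert a (Finset.univ.filter fun j : Fin n => j < a ∧ π a < π j) ⊆
        Finset.univ.filter fun j : Fin n => j < b ∧ π b < π j := by
      intro x hx
      simp only [Finset.mem_insert, Finset.mem_filter, Finset.mem_univ, true_and] at hx ⊢
      rcases hx with rfl | ⟨hx1, hx2⟩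
      · exact ⟨by rw [Fin.lt_def]; omega, h⟩
      · exact ⟨by rw [Fin.lt_def] at hx1 ⊢; omega, h.trans hx2⟩
    calc (Finset.univ.filter fun j : Fin n => j < a ∧ π a < π j).card
        < (insert a (Finset.univ.filter fun j : Fin n => j < a ∧ π a < π j)).card := by
          rw [Finset.card_insert_of_notMem hnot]; omega
      _ ≤ _ := Finset.card_le_card hsub
  · intro h
    by_contra hc
    push_neg at hc
    have hne : π b ≠ π a := fun he => by
      have hba := π.injective he
      rw [hba] at hab; omega
    have hab' : π a < π b := lt_of_le_of_ne hc (Ne.symm hne)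
    have hsub : (Finset.univ.filter fun j : Fin n => j < b ∧ π b < π j) ⊆
        Finset.univ.filter fun j : Fin n => j < a ∧ π a < π j := by
      intro x hx
      simp only [Finset.mem_filter, Finset.mem_univ, true_and] at hx ⊢
      obtain ⟨hx1, hx2⟩ := hx
      have hxa : x < a := by
        rcases lt_or_eq_of_le (show (x : ℕ) ≤ a by rw [Fin.lt_def] at hx1; omega) with h' | h'
        · exact Fin.lt_def.mpr h'
        · exfalso
          have hxa' : x = a := Fin.ext h'
          subst hxa'
          exact absurd hx2 (not_lt.mpr hab'.le)
      exact ⟨hxa, hab'.trans hx2⟩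
    exact absurd (Finset.card_le_card hsub) (not_le.mpr h)

/-- The Lehmer code sends the descent number of a permutation to the ascent number
of its inversion sequence. -/
theorem lehmer_des_eq_asc (n : ℕ) (π : Equiv.Perm (Fin n)) :
    desN (wordOf π) = ascN (lehmer π) := by
  unfold desN ascN wordOf lehmer
  rw [List.length_ofFn, List.length_ofFn]
  apply congrArg
  apply Finset.filter_congr
  intro i hi
  simp only [Finset.mem_range] at hi
  have hi1 : i < n := lt_of_lt_of_le hi (Nat.sub_le n 1)
  have hi2 : i + 1 < n := by omega
  rw [List.getD_eq_getElem _ _ (by simpa using hi2),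
      List.getD_eq_getElem _ _ (by simpa using hi1),
      List.getD_eq_getElem _ _ (by simpa using hi1),
      List.getD_eq_getElem _ _ (by simpa using hi2)]
  simp only [List.getElem_ofFn]
  rw [show ((π ⟨i + 1, hi2⟩ : Fin n) : ℕ) < ((π ⟨i, hi1⟩ : Fin n) : ℕ) ↔
      π ⟨i + 1, hi2⟩ < π ⟨i, hi1⟩ from Iff.rfl]
  exact lehmer_key π ⟨i, hi1⟩ ⟨i + 1, hi2⟩ rfl
end

section
/- In any ascent sequence, all maximal entries appear in the initial strictly increasing run: if s is an ascent sequence of length n with max(s) = p, then s_i = i − 1 for all 1 ≤ i ≤ p, and s_i < i − 1 for all i > p. -/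
lemma ascN_le (t : List ℕ) : ascN t ≤ t.length - 1 := by
  classical
  exact (Finset.card_filter_le _ _).trans_eq (Finset.card_range _)

lemma getD_take_eq (l : List ℕ) (n m : ℕ) (h : m < n) :
    (l.take n).getD m 0 = l.getD m 0 := by
  simp [List.getD_eq_getElem?_getD, List.getElem?_take, h]

lemma key_lemma (s : List ℕ) (hs : IsAscSeq s) :
    ∀ i < s.length, s.getD i 0 = i → ∀ j ≤ i, s.getD j 0 = j := by
  classical
  intro i hi hsi j hj
  rcases Nat.eq_or_lt_of_le hj with rfl | hj'
  · exact hsi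
  · have hi1 : 1 ≤ i := by omega
    have h2 := hs.2 i hi
    rw [hsi] at h2
    have hlen : (s.take i).length = i := by
      rw [List.length_take]; omega
    have hle : ascN (s.take i) ≤ i - 1 := by
      have := ascN_le (s.take i); omega
    have hasc : ascN (s.take i) = i - 1 := by omega
    have hfeq : ((Finset.range ((s.take i).length - 1)).filter
        fun m => (s.take i).getD m 0 < (s.take i).getD (m+1) 0) =
        Finset.range ((s.take i).length - 1) := by
      apply Finset.eq_of_subset_of_card_le (Finset.filter_subset _ _)
      rw [Finset.card_range]
      have : ((Finset.range ((s.take i).length - 1)).filter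
        fun m => (s.take i).getD m 0 < (s.take i).getD (m+1) 0).card = i - 1 := hasc
      omega
    have hfull : ∀ k, k < i - 1 → s.getD k 0 < s.getD (k+1) 0 := by
      intro k hk
      have hk' : k ∈ Finset.range ((s.take i).length - 1) := by
        rw [Finset.mem_range]; omega
      rw [← hfeq, Finset.mem_filter] at hk'
      have := hk'.2
      rwa [getD_take_eq s i k (by omega), getD_take_eq s i (k+1) (by omega)] at this
    have hmono : ∀ m, m ≤ i - 1 → m ≤ s.getD m 0 := by
      intro m
      induction m with
      | zero => intro _; exact Nat.zero_le _
      | succ m ih =>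
        intro hm
        have h1 := hfull m (by omega)
        have h2 := ih (by omega)
        omega
    have hjle := hs.1 j (by omega)
    have := hmono j (by omega)
    omega

/-- All maximal entries of an ascent sequence appear in the initial strictly
increasing run: if `max s = p` then (0-indexed) `s i = i` for `i < p` and
`s i < i` for `p ≤ i < n`. -/
theorem maximals_in_initial_run (n p : ℕ) (s : List ℕ)
    (hs : IsAscSeq s) (hl : s.length = n) (hp : maxN s = p) :
    (∀ i < p, s.getD i 0 = i) ∧ (∀ i, p ≤ i → i < n → s.getD i 0 < i) := by
  classical
  subst hl
  subst hp
  set A := (Finset.range s.length).filter (fun i => s.getD i 0 = i) with hA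
  have hcardA : A.card = maxN s := rfl
  have hdc : ∀ i ∈ A, ∀ j ≤ i, j ∈ A := by
    intro i hiA j hj
    rw [hA, Finset.mem_filter, Finset.mem_range] at hiA ⊢
    exact ⟨lt_of_le_of_lt hj hiA.1, key_lemma s hs i hiA.1 hiA.2 j hj⟩
  have hrange : Finset.range (maxN s) ⊆ A := by
    intro i hi
    rw [Finset.mem_range] at hi
    by_contra hcon
    have hsub : A ⊆ Finset.range i := by
      intro a ha
      rw [Finset.mem_range]
      by_contra h'
      exact hcon (hdc a ha i (by omega))
    have := Finset.card_le_card hsub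
    rw [Finset.card_range, hcardA] at this
    omega
  have hAeq : Finset.range (maxN s) = A :=
    Finset.eq_of_subset_of_card_le hrange (by rw [Finset.card_range, hcardA])
  constructor
  · intro i hi
    have : i ∈ A := hrange (Finset.mem_range.mpr hi)
    rw [hA, Finset.mem_filter] at this
    exact this.2
  · intro i hpi hin
    have h1 := hs.1 i hin
    rcases Nat.lt_or_ge (s.getD i 0) i with h | h
    · exact h
    · have hieq : s.getD i 0 = i := by omega
      have : i ∈ A := by
        rw [hA, Finset.mem_filter, Finset.mem_range]; exact ⟨hin, hieq⟩
      rw [← hAeq, Finset.mem_range] at this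
      omega
end

section
/- Define B_n as the set of inversion sequences b of length n satisfying: (a) if b_i ≥ b_{i+1} and b_i = i−1, then b_j < j−1 for all j > i; (b) if b_i ≥ b_{i+1} and b_i < i−1, then the value i−1 does not occur among b_{i+1},...,b_n. Then |B_n| equals the number of ascent sequences of length n. -/
/-- Membership in `B_n` (0-indexed): an inversion sequence `b` such that whenever
`b k ≥ b (k+1)`: (a) if `b k = k` then `b m < m` for all `m > k`; (b) if `b k < k`
then the value `k` does not occur after position `k`. -/
def IsB (b : List ℕ) : Prop :=
  IsInvSeq b ∧ ∀ k, k + 1 < b.length → b.getD (k+1) 0 ≤ b.getD k 0 →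
    (b.getD k 0 = k → ∀ m, k < m → m < b.length → b.getD m 0 < m) ∧
    (b.getD k 0 < k → ∀ m, k < m → m < b.length → b.getD m 0 ≠ k)

/-! ### Auxiliary development -/

namespace BAsc

/-- values forbidden as the next entry of a `B`-sequence `b` (as a predicate). -/
def Pb (b : List ℕ) (x : ℕ) : Prop :=
  ∀ k < b.length, k + 1 < b.length → b.getD (k+1) 0 ≤ b.getD k 0 →
    (b.getD k 0 = k → x ≠ b.length) ∧ (b.getD k 0 < k → x ≠ k)

instance (b : List ℕ) : DecidablePred (Pb b) := fun _ => Nat.decidableBallLT _ _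

/-- the set of valid next entries of a `B`-sequence `b`. -/
def Vb (b : List ℕ) : Finset ℕ := (Finset.range (b.length + 1)).filter (Pb b)

/-- rank of `x` inside a finite set of naturals. -/
def rk (V : Finset ℕ) (x : ℕ) : ℕ := (V.filter (· < x)).card

def toA' : List ℕ → List ℕ
  | [] => []
  | x :: t => rk (Vb t.reverse) x :: toA' t

/-- the bijection from `B`-sequences to ascent sequences. -/
def toA (b : List ℕ) : List ℕ := (toA' b.reverse).reverse

@[simp] lemma toA_nil : toA [] = [] := rfl

lemma toA_concat (b : List ℕ) (x : ℕ) : toA (b ++ [x]) = toA b ++ [rk (Vb b) x] := by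
  simp [toA, toA']

@[simp] lemma length_toA (b : List ℕ) : (toA b).length = b.length := by
  induction b using List.reverseRecOn with
  | nil => rfl
  | append_singleton b x ih => rw [toA_concat]; simp [ih]

-- getD lemmas
lemma getD_concat_lt (l : List ℕ) (x : ℕ) {i : ℕ} (h : i < l.length) :
    (l ++ [x]).getD i 0 = l.getD i 0 := List.getD_append _ _ _ _ h

lemma getD_concat_self (l : List ℕ) (x : ℕ) : (l ++ [x]).getD l.length 0 = x := by
  rw [List.getD_append_right _ _ _ _ le_rfl]; simp

lemma getD_concat_gt (l : List ℕ) (x : ℕ) {i : ℕ} (h : l.length < i) :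
    (l ++ [x]).getD i 0 = 0 := by
  rw [List.getD_append_right _ _ _ _ h.le, List.getD]
  rw [List.getElem?_eq_none (by simp only [List.length_singleton]; omega)]; rfl

lemma ascN_le (s : List ℕ) : ascN s + 1 ≤ s.length ∨ s = [] := by
  rcases List.eq_nil_or_concat s with h | ⟨t, y, rfl⟩
  · right; exact h
  · left
    have h1 : ascN (t ++ [y]) ≤ (Finset.range ((t ++ [y]).length - 1)).card :=
      Finset.card_filter_le _ _
    simp at h1 ⊢
    omega

lemma ascN_concat (s : List ℕ) (y : ℕ) (hs : s ≠ []) :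
    ascN (s ++ [y]) = ascN s + (if s.getD (s.length - 1) 0 < y then 1 else 0) := by
  obtain ⟨m, hm⟩ : ∃ m, s.length = m + 1 := ⟨s.length - 1, by
    have := List.length_pos_iff.2 hs; omega⟩
  have hlen : (s ++ [y]).length - 1 = m + 1 := by simp [hm]
  rw [ascN, hlen, Finset.range_add_one, Finset.filter_insert]
  have hfe : (Finset.range m).filter (fun i => (s ++ [y]).getD i 0 < (s ++ [y]).getD (i+1) 0)
      = (Finset.range m).filter (fun i => s.getD i 0 < s.getD (i+1) 0) := by
    apply Finset.filter_congr
    intro i hi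
    rw [Finset.mem_range] at hi
    rw [getD_concat_lt _ _ (by omega), getD_concat_lt _ _ (by omega)]
  have hub : ascN s = ((Finset.range m).filter
      (fun i => s.getD i 0 < s.getD (i+1) 0)).card := by
    rw [ascN, hm]; norm_num
  have hgm : (s ++ [y]).getD m 0 = s.getD m 0 := getD_concat_lt _ _ (by omega)
  have hgm1 : (s ++ [y]).getD (m+1) 0 = y := by
    have := getD_concat_self s y; rw [hm] at this; exact this
  have hmnot : m ∉ Finset.range m := by simp
  rw [hm]
  simp only [Nat.add_sub_cancel, hgm, hgm1]
  split_ifs with h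
  · rw [Finset.card_insert_of_notMem (by simp), hfe, hub]
  · rw [hfe, hub]; omega


lemma take_concat_of_le (s : List ℕ) (y : ℕ) {i : ℕ} (h : i ≤ s.length) :
    (s ++ [y]).take i = s.take i := List.take_append_of_le_length h

lemma ascSeq_concat_iff (s : List ℕ) (y : ℕ) (hs : s ≠ []) :
    IsAscSeq (s ++ [y]) ↔ IsAscSeq s ∧ y ≤ ascN s + 1 := by
  have hlen : (s ++ [y]).length = s.length + 1 := by simp
  have htake : (s ++ [y]).take s.length = s := by
    rw [take_concat_of_le s y le_rfl, List.take_length]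
  constructor
  · rintro ⟨hinv, hasc⟩
    refine ⟨⟨fun i hi => ?_, fun i hi => ?_⟩, ?_⟩
    · have := hinv i (by omega)
      rwa [getD_concat_lt _ _ hi] at this
    · have := hasc i (by omega)
      rwa [getD_concat_lt _ _ hi, take_concat_of_le _ _ hi.le] at this
    · have := hasc s.length (by omega)
      rwa [getD_concat_self, htake] at this
  · rintro ⟨⟨hinv, hasc⟩, hy⟩
    have hyn : y ≤ s.length := by
      rcases ascN_le s with h | h
      · omega
      · exact absurd h hs
    refine ⟨fun i hi => ?_, fun i hi => ?_⟩
    · rcases Nat.lt_or_ge i s.length with h | h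
      · rw [getD_concat_lt _ _ h]; exact hinv i h
      · have : i = s.length := by omega
        subst this; rw [getD_concat_self]; exact hyn
    · rcases Nat.lt_or_ge i s.length with h | h
      · rw [getD_concat_lt _ _ h, take_concat_of_le _ _ h.le]; exact hasc i h
      · have : i = s.length := by omega
        subst this; rw [getD_concat_self, htake]; exact hy

lemma mem_Vb_iff {b : List ℕ} {x : ℕ} : x ∈ Vb b ↔ x ≤ b.length ∧ Pb b x := by
  simp [Vb, Nat.lt_succ_iff]

lemma isB_concat_iff (b : List ℕ) (x : ℕ) :
    IsB (b ++ [x]) ↔ IsB b ∧ x ∈ Vb b := by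
  set n := b.length with hn
  have hlen : (b ++ [x]).length = n + 1 := by simp [hn]
  have hg : ∀ i < n, (b ++ [x]).getD i 0 = b.getD i 0 := fun i hi => getD_concat_lt b x hi
  have hgn : (b ++ [x]).getD n 0 = x := getD_concat_self b x
  constructor
  · rintro ⟨hinv, hcond⟩
    have hxn : x ≤ n := by have := hinv n (by omega); rwa [hgn] at this
    refine ⟨⟨fun i hi => ?_, fun k hk htrig => ?_⟩, mem_Vb_iff.2 ⟨hxn, fun k _ hk htrig => ?_⟩⟩
    · have := hinv i (by omega); rwa [hg i hi] at this
    · -- B conditions for b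
      have htrig' : (b ++ [x]).getD (k+1) 0 ≤ (b ++ [x]).getD k 0 := by
        rw [hg k (by omega), hg (k+1) (by omega)]; exact htrig
      obtain ⟨ha, hb2⟩ := hcond k (by omega) htrig'
      rw [hg k (by omega)] at ha hb2
      constructor
      · intro hk2 m hm1 hm2
        have := ha hk2 m hm1 (by omega)
        rwa [hg m (by omega)] at this
      · intro hk2 m hm1 hm2
        have := hb2 hk2 m hm1 (by omega)
        rwa [hg m (by omega)] at this
    · -- Pb b x
      have htrig' : (b ++ [x]).getD (k+1) 0 ≤ (b ++ [x]).getD k 0 := by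
        rw [hg k (by omega), hg (k+1) (by omega)]; exact htrig
      obtain ⟨ha, hb2⟩ := hcond k (by omega) htrig'
      rw [hg k (by omega)] at ha hb2
      constructor
      · intro hk2
        have := ha hk2 n (by omega) (by omega)
        rw [hgn] at this; omega
      · intro hk2
        have := hb2 hk2 n (by omega) (by omega)
        rwa [hgn] at this
  · rintro ⟨⟨hinv, hcond⟩, hx⟩
    obtain ⟨hxn, hPb⟩ := mem_Vb_iff.1 hx
    refine ⟨fun i hi => ?_, fun k hk htrig => ?_⟩
    · rcases Nat.lt_or_ge i n with h | h
      · rw [hg i h]; exact hinv i h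
      · have : i = n := by omega
        subst this; rw [hgn]; exact hxn
    · rw [hlen] at hk
      rcases Nat.lt_or_ge (k+1) n with hkn | hkn
      · -- old pair
        rw [hg k (by omega), hg (k+1) hkn] at htrig
        obtain ⟨ha, hb2⟩ := hcond k hkn htrig
        obtain ⟨ha', hb2'⟩ := hPb k (by omega) hkn htrig
        rw [hg k (by omega)]
        constructor
        · intro hk2 m hm1 hm2
          rcases Nat.lt_or_ge m n with h | h
          · rw [hg m h]; exact ha hk2 m hm1 h
          · have : m = n := by omega
            subst this; rw [hgn]
            have := ha' hk2; omega
        · intro hk2 m hm1 hm2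
          rcases Nat.lt_or_ge m n with h | h
          · rw [hg m h]; exact hb2 hk2 m hm1 h
          · have : m = n := by omega
            subst this; rw [hgn]; exact hb2' hk2
      · -- new pair k = n - 1
        have hkeq : k + 1 = n := by omega
        rw [hg k (by omega), hkeq, hgn] at htrig
        rw [hg k (by omega)]
        constructor
        · intro hk2 m hm1 hm2
          have : m = n := by omega
          subst this; rw [hgn]; omega
        · intro hk2 m hm1 hm2
          have : m = n := by omega
          subst this; rw [hgn]; omega

lemma last_mem_Vb (b : List ℕ) (x : ℕ) (h : IsB (b ++ [x])) : x ∈ Vb (b ++ [x]) := by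
  set n := b.length with hn
  have hlen : (b ++ [x]).length = n + 1 := by simp [hn]
  have hgn : (b ++ [x]).getD n 0 = x := getD_concat_self b x
  have hxn : x ≤ n := by have := h.1 n (by omega); rwa [hgn] at this
  rw [mem_Vb_iff, hlen]
  refine ⟨by omega, fun k hk hk1 htrig => ?_⟩
  rw [hlen] at hk1
  constructor
  · intro _; omega
  · intro hlt
    have := (h.2 k (by rw [hlen]; omega) htrig).2 hlt n (by omega) (by omega)
    rwa [hgn] at this

lemma mem_Vb_concat_iff_of_le (b : List ℕ) {x y : ℕ} (hb : IsB b) (hx : x ∈ Vb b)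
    (hy : y ≤ x) : (y ∈ Vb (b ++ [x]) ↔ y ∈ Vb b) := by
  set n := b.length with hn
  have hlen : (b ++ [x]).length = n + 1 := by simp [hn]
  have hg : ∀ i < n, (b ++ [x]).getD i 0 = b.getD i 0 := fun i hi => getD_concat_lt b x hi
  have hgn : (b ++ [x]).getD n 0 = x := getD_concat_self b x
  obtain ⟨hxn, hPx⟩ := mem_Vb_iff.1 hx
  constructor
  · intro hy'
    obtain ⟨hyn, hPy⟩ := mem_Vb_iff.1 hy'
    rw [mem_Vb_iff]
    refine ⟨by omega, fun k hk hk1 htrig => ?_⟩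
    constructor
    · intro hbk
      -- x ≠ n hence y ≤ x < n
      have := (hPx k hk hk1 htrig).1 hbk
      omega
    · intro hbk
      have htrig' : (b ++ [x]).getD (k+1) 0 ≤ (b ++ [x]).getD k 0 := by
        rw [hg k (by omega), hg (k+1) (by omega)]; exact htrig
      have := (hPy k (by rw [hlen]; omega) (by rw [hlen]; omega) htrig').2
      rw [hg k (by omega)] at this
      exact this hbk
  · intro hy'
    obtain ⟨hyn, hPy⟩ := mem_Vb_iff.1 hy'
    rw [mem_Vb_iff, hlen]
    refine ⟨by omega, fun k hk hk1 htrig => ?_⟩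
    rw [hlen] at hk1
    rcases Nat.lt_or_ge (k+1) n with hkn | hkn
    · rw [hg k (by omega), hg (k+1) hkn] at htrig
      rw [hg k (by omega)]
      constructor
      · intro _; omega
      · intro hbk; exact (hPy k (by omega) hkn htrig).2 hbk
    · have hkeq : k + 1 = n := by omega
      rw [hg k (by omega), hkeq, hgn] at htrig
      rw [hg k (by omega)]
      constructor
      · intro _; omega
      · intro hbk; omega

def Fb (b : List ℕ) : Finset ℕ :=
  (Finset.range b.length).filter
    (fun k => k + 1 < b.length ∧ b.getD (k+1) 0 ≤ b.getD k 0 ∧ b.getD k 0 < k)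

def Mb (b : List ℕ) : Finset ℕ :=
  (Finset.range b.length).filter
    (fun k => k + 1 < b.length ∧ b.getD (k+1) 0 ≤ b.getD k 0 ∧ b.getD k 0 = k)

lemma not_mem_Fb_self (b : List ℕ) : b.length - 1 ∉ Fb b := by
  simp only [Fb, Finset.mem_filter, Finset.mem_range, not_and]
  intro h1 h2
  omega

lemma card_Vb_add (b : List ℕ) :
    (Vb b).card + (Fb b).card + (if (Mb b).Nonempty then 1 else 0) = b.length + 1 := by
  classical
  set n := b.length with hn
  set Bad : Finset ℕ := Fb b ∪ (if (Mb b).Nonempty then {n} else ∅) with hBad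
  have hFsub : Fb b ⊆ Finset.range (n+1) := by
    intro k hk
    simp only [Fb, Finset.mem_filter, Finset.mem_range] at hk
    simp only [Finset.mem_range]; omega
  have hBadsub : Bad ⊆ Finset.range (n+1) := by
    intro k hk
    rcases Finset.mem_union.1 hk with h | h
    · exact hFsub h
    · split_ifs at h with hM
      · simp only [Finset.mem_singleton] at h; subst h; simp
      · simp at h
  have hVeq : Vb b = Finset.range (n+1) \ Bad := by
    ext z
    simp only [Vb, Finset.mem_filter, Finset.mem_sdiff, Finset.mem_range]
    constructor
    · rintro ⟨hz, hP⟩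
      refine ⟨hz, fun hzB => ?_⟩
      rcases Finset.mem_union.1 hzB with h | h
      · simp only [Fb, Finset.mem_filter, Finset.mem_range] at h
        obtain ⟨h1, h2, h3, h4⟩ := h
        exact (hP z h1 h2 h3).2 h4 rfl
      · split_ifs at h with hM
        · simp only [Finset.mem_singleton] at h
          obtain ⟨k, hk⟩ := hM
          simp only [Mb, Finset.mem_filter, Finset.mem_range] at hk
          obtain ⟨h1, h2, h3, h4⟩ := hk
          exact (hP k h1 h2 h3).1 h4 h
        · simp at h
    · rintro ⟨hz, hzB⟩
      refine ⟨hz, fun k hk hk1 htrig => ⟨fun hbk hzn => ?_, fun hbk hzk => ?_⟩⟩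
      · apply hzB
        apply Finset.mem_union_right
        have hM : (Mb b).Nonempty := ⟨k, by
          simp only [Mb, Finset.mem_filter, Finset.mem_range]
          exact ⟨hk, hk1, htrig, hbk⟩⟩
        rw [if_pos hM]
        simp [hzn, hn]
      · apply hzB
        apply Finset.mem_union_left
        simp only [Fb, Finset.mem_filter, Finset.mem_range]
        subst hzk
        exact ⟨hk, hk1, htrig, hbk⟩
  have hcardBad : Bad.card = (Fb b).card + (if (Mb b).Nonempty then 1 else 0) := by
    rw [hBad]
    split_ifs with hM
    · have hnF : n ∉ Fb b := fun hc => by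
        simp only [Fb, Finset.mem_filter, Finset.mem_range] at hc
        omega
      rw [Finset.card_union_of_disjoint (by
        simp [Finset.disjoint_singleton_right, hnF])]
      simp
    · simp
  rw [hVeq, Finset.card_sdiff_of_subset hBadsub, Finset.card_range, hcardBad]
  have := Finset.card_le_card hBadsub
  rw [Finset.card_range] at this
  omega

lemma mem_Fb {b : List ℕ} {k : ℕ} : k ∈ Fb b ↔
    k + 1 < b.length ∧ b.getD (k+1) 0 ≤ b.getD k 0 ∧ b.getD k 0 < k := by
  simp only [Fb, Finset.mem_filter, Finset.mem_range]
  constructor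
  · rintro ⟨_, h⟩; exact h
  · rintro ⟨h1, h2, h3⟩; exact ⟨by omega, h1, h2, h3⟩

lemma mem_Mb {b : List ℕ} {k : ℕ} : k ∈ Mb b ↔
    k + 1 < b.length ∧ b.getD (k+1) 0 ≤ b.getD k 0 ∧ b.getD k 0 = k := by
  simp only [Mb, Finset.mem_filter, Finset.mem_range]
  constructor
  · rintro ⟨_, h⟩; exact h
  · rintro ⟨h1, h2, h3⟩; exact ⟨by omega, h1, h2, h3⟩

lemma Fb_concat (b : List ℕ) (x : ℕ) (hb : b ≠ []) :
    Fb (b ++ [x]) = if x ≤ b.getD (b.length - 1) 0 ∧ b.getD (b.length - 1) 0 < b.length - 1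
      then insert (b.length - 1) (Fb b) else Fb b := by
  have hpos : 0 < b.length := List.length_pos_iff.2 hb
  have hL : (b ++ [x]).length = b.length + 1 := by simp
  have hg : ∀ i < b.length, (b ++ [x]).getD i 0 = b.getD i 0 := fun i hi => getD_concat_lt b x hi
  have hgn : (b ++ [x]).getD b.length 0 = x := getD_concat_self b x
  ext k
  rw [mem_Fb, hL]
  by_cases hk1 : k + 1 < b.length
  · rw [hg k (by omega), hg (k+1) hk1]
    have hrhs : (k + 1 < b.length ∧ b.getD (k+1) 0 ≤ b.getD k 0 ∧ b.getD k 0 < k)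
        ↔ k ∈ Fb b := mem_Fb.symm
    split_ifs with h
    · rw [Finset.mem_insert]
      constructor
      · rintro ⟨_, h2, h3⟩; exact Or.inr (hrhs.1 ⟨hk1, h2, h3⟩)
      · rintro (hh | hh)
        · omega
        · obtain ⟨_, h2, h3⟩ := mem_Fb.1 hh; exact ⟨by omega, h2, h3⟩
    · constructor
      · rintro ⟨_, h2, h3⟩; exact hrhs.1 ⟨hk1, h2, h3⟩
      · intro hh; obtain ⟨_, h2, h3⟩ := mem_Fb.1 hh; exact ⟨by omega, h2, h3⟩
  · by_cases hk2 : k + 1 = b.length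
    · -- k = b.length - 1
      have hgk : (b ++ [x]).getD k 0 = b.getD k 0 := hg k (by omega)
      have hgk1 : (b ++ [x]).getD (k+1) 0 = x := by rw [hk2]; exact hgn
      rw [hgk, hgk1]
      have hkeq : k = b.length - 1 := by omega
      have hknotF : k ∉ Fb b := by rw [hkeq]; exact not_mem_Fb_self b
      split_ifs with h
      · rw [Finset.mem_insert]
        constructor
        · rintro ⟨_, _, h3⟩; exact Or.inl hkeq
        · rintro (hh | hh)
          · rw [← hkeq] at h
            exact ⟨by omega, h.1, by omega⟩
          · exact absurd hh hknotF
      · rw [← hkeq] at h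
        constructor
        · rintro ⟨_, h2, h3⟩
          exact absurd ⟨h2, h3⟩ h
        · intro hh; exact absurd hh hknotF
    · -- k ≥ b.length
      have h1 : ¬ (k + 1 < b.length + 1) := by omega
      have hknotF : k ∉ Fb b := fun hh => by
        have := (mem_Fb.1 hh).1; omega
      split_ifs with h
      · rw [Finset.mem_insert]
        constructor
        · rintro ⟨h2, _⟩; omega
        · rintro (hh | hh)
          · omega
          · exact absurd hh hknotF
      · constructor
        · rintro ⟨h2, _⟩; omega
        · intro hh; exact absurd hh hknotF

lemma Mb_concat (b : List ℕ) (x : ℕ) (hb : b ≠ []) :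
    (Mb (b ++ [x])).Nonempty ↔ (Mb b).Nonempty ∨
      (x ≤ b.getD (b.length - 1) 0 ∧ b.getD (b.length - 1) 0 = b.length - 1) := by
  have hpos : 0 < b.length := List.length_pos_iff.2 hb
  have hL : (b ++ [x]).length = b.length + 1 := by simp
  have hg : ∀ i < b.length, (b ++ [x]).getD i 0 = b.getD i 0 := fun i hi => getD_concat_lt b x hi
  have hgn : (b ++ [x]).getD b.length 0 = x := getD_concat_self b x
  constructor
  · rintro ⟨k, hk⟩
    obtain ⟨h1, h2, h3⟩ := mem_Mb.1 hk
    rw [hL] at h1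
    by_cases hk1 : k + 1 < b.length
    · left
      refine ⟨k, mem_Mb.2 ⟨hk1, ?_, ?_⟩⟩
      · rw [← hg k (by omega), ← hg (k+1) hk1]; exact h2
      · rw [← hg k (by omega)]; exact h3
    · right
      have hkeq : k = b.length - 1 := by omega
      have hgk : (b ++ [x]).getD k 0 = b.getD k 0 := hg k (by omega)
      have hgk1 : (b ++ [x]).getD (k+1) 0 = x := by
        have : k + 1 = b.length := by omega
        rw [this]; exact hgn
      rw [hgk, hgk1] at h2
      rw [hgk] at h3
      rw [← hkeq]
      exact ⟨by omega, by omega⟩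
  · rintro (⟨k, hk⟩ | ⟨h1, h2⟩)
    · obtain ⟨hh1, hh2, hh3⟩ := mem_Mb.1 hk
      refine ⟨k, mem_Mb.2 ⟨by rw [hL]; omega, ?_, ?_⟩⟩
      · rw [hg k (by omega), hg (k+1) (by omega)]; exact hh2
      · rw [hg k (by omega)]; exact hh3
    · refine ⟨b.length - 1, mem_Mb.2 ⟨by rw [hL]; omega, ?_, ?_⟩⟩
      · have e1 : b.length - 1 + 1 = b.length := by omega
        rw [e1, hgn, hg (b.length - 1) (by omega)]
        exact h1
      · rw [hg (b.length - 1) (by omega)]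
        omega
lemma noM_of_last_max (b : List ℕ) (hb : IsB b) (hb0 : b ≠ [])
    (hl : b.getD (b.length - 1) 0 = b.length - 1) : ¬ (Mb b).Nonempty := by
  rintro ⟨k, hk⟩
  simp only [Mb, Finset.mem_filter, Finset.mem_range] at hk
  obtain ⟨h1, h2, h3, h4⟩ := hk
  have := (hb.2 k h2 h3).1 h4 (b.length - 1) (by omega) (by omega)
  omega

lemma card_Vb_concat (b : List ℕ) {x : ℕ} (hb : IsB b) (hb0 : b ≠ []) :
    (Vb (b ++ [x])).card
      = (Vb b).card + (if b.getD (b.length - 1) 0 < x then 1 else 0) := by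
  classical
  have hpos : 0 < b.length := List.length_pos_iff.2 hb0
  set l := b.getD (b.length - 1) 0 with hl
  have hlle : l ≤ b.length - 1 := by
    have := hb.1 (b.length - 1) (by omega); omega
  have h1 := card_Vb_add b
  have h2 := card_Vb_add (b ++ [x])
  rw [List.length_append, List.length_singleton] at h2
  rw [Fb_concat b x hb0] at h2
  have hM := Mb_concat b x hb0
  by_cases hc : x ≤ l
  · rw [if_neg (by omega)]
    by_cases hc2 : l < b.length - 1
    · rw [if_pos ⟨hc, hc2⟩, Finset.card_insert_of_notMem (not_mem_Fb_self b)] at h2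
      have hMeq : (Mb (b ++ [x])).Nonempty ↔ (Mb b).Nonempty := by
        rw [hM]
        constructor
        · rintro (h | h)
          · exact h
          · omega
        · exact Or.inl
      by_cases hMb : (Mb b).Nonempty
      · rw [if_pos (hMeq.2 hMb)] at h2; rw [if_pos hMb] at h1; omega
      · rw [if_neg (fun hc => hMb (hMeq.1 hc))] at h2; rw [if_neg hMb] at h1; omega
    · have hleq : l = b.length - 1 := by omega
      have hnoM : ¬ (Mb b).Nonempty := noM_of_last_max b hb hb0 hleq
      rw [if_neg (by omega), if_pos (hM.2 (Or.inr ⟨hc, hleq⟩))] at h2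
      rw [if_neg hnoM] at h1
      omega
  · rw [if_pos (by omega)]
    rw [if_neg (by omega)] at h2
    have hMeq : (Mb (b ++ [x])).Nonempty ↔ (Mb b).Nonempty := by
      rw [hM]
      constructor
      · rintro (h | h)
        · exact h
        · omega
      · exact Or.inl
    by_cases hMb : (Mb b).Nonempty
    · rw [if_pos (hMeq.2 hMb)] at h2; rw [if_pos hMb] at h1; omega
    · rw [if_neg (fun hc => hMb (hMeq.1 hc))] at h2; rw [if_neg hMb] at h1; omega

lemma rk_lt_card {V : Finset ℕ} {x : ℕ} (hx : x ∈ V) : rk V x < V.card := by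
  apply Finset.card_lt_card
  constructor
  · exact Finset.filter_subset _ _
  · intro h
    have := Finset.mem_filter.1 (h hx)
    exact absurd this.2 (lt_irrefl x)

lemma rk_strictMonoOn {V : Finset ℕ} {x y : ℕ} (hx : x ∈ V) (hxy : x < y) :
    rk V x < rk V y := by
  apply Finset.card_lt_card
  constructor
  · intro z hz
    simp only [Finset.mem_filter] at hz ⊢
    exact ⟨hz.1, hz.2.trans hxy⟩
  · intro h
    have := h (Finset.mem_filter.2 ⟨hx, hxy⟩)
    exact absurd (Finset.mem_filter.1 this).2 (lt_irrefl x)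

lemma rk_injOn {V : Finset ℕ} {x y : ℕ} (hx : x ∈ V) (hy : y ∈ V)
    (h : rk V x = rk V y) : x = y := by
  rcases lt_trichotomy x y with h1 | h1 | h1
  · exact absurd h (rk_strictMonoOn hx h1).ne
  · exact h1
  · exact absurd h.symm (rk_strictMonoOn hy h1).ne

lemma rk_surjOn {V : Finset ℕ} {r : ℕ} (hr : r < V.card) : ∃ x ∈ V, rk V x = r := by
  have himg : V.image (rk V) = Finset.range V.card := by
    apply Finset.eq_of_subset_of_card_le
    · intro r hr
      obtain ⟨x, hx, rfl⟩ := Finset.mem_image.1 hr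
      exact Finset.mem_range.2 (rk_lt_card hx)
    · rw [Finset.card_range, Finset.card_image_of_injOn]
      intro x hx y hy h
      exact rk_injOn hx hy h
  have : r ∈ V.image (rk V) := himg ▸ Finset.mem_range.2 hr
  obtain ⟨x, hx, hxr⟩ := Finset.mem_image.1 this
  exact ⟨x, hx, hxr⟩


lemma rk_Vb_concat (b : List ℕ) {x : ℕ} (hb : IsB b) (hx : x ∈ Vb b) :
    rk (Vb (b ++ [x])) x = rk (Vb b) x := by
  have h : (Vb (b ++ [x])).filter (· < x) = (Vb b).filter (· < x) := by
    ext y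
    simp only [Finset.mem_filter]
    constructor
    · rintro ⟨h1, h2⟩; exact ⟨(mem_Vb_concat_iff_of_le b hb hx h2.le).1 h1, h2⟩
    · rintro ⟨h1, h2⟩; exact ⟨(mem_Vb_concat_iff_of_le b hb hx h2.le).2 h1, h2⟩
  rw [rk, h, rk]

lemma rk_lt_rk_iff {V : Finset ℕ} {x y : ℕ} (hx : x ∈ V) (hy : y ∈ V) :
    rk V y < rk V x ↔ y < x := by
  constructor
  · intro h
    by_contra hc
    rcases Nat.lt_or_ge x y with h1 | h1
    · exact absurd (rk_strictMonoOn hx h1) (by omega)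
    · have : x = y := by omega
      subst this; omega
  · exact rk_strictMonoOn hy

lemma isB_nil : IsB [] := by
  constructor
  · intro i hi; simp at hi
  · intro k hk; simp at hk

lemma mem_Vb_nil {x : ℕ} : x ∈ Vb [] ↔ x = 0 := by
  rw [mem_Vb_iff]
  constructor
  · rintro ⟨h, _⟩; simpa using h
  · rintro rfl
    exact ⟨by simp, fun k hk => by simp at hk⟩

lemma rk_zero (V : Finset ℕ) : rk V 0 = 0 := by
  rw [rk]
  convert Finset.card_empty
  ext y
  simp

lemma ascSeq_nil : IsAscSeq [] := by
  constructor
  · intro i hi; simp at hi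
  · intro i hi; simp at hi

lemma ascN_nil : ascN [] = 0 := rfl

lemma ascN_single (y : ℕ) : ascN [y] = 0 := rfl

lemma ascSeq_single_zero : IsAscSeq [0] := by
  constructor
  · intro i hi
    simp at hi
    subst hi; simp
  · intro i hi
    simp at hi
    subst hi
    simp [ascN_nil]

lemma toA_ne_nil {b : List ℕ} (hb : b ≠ []) : toA b ≠ [] := by
  intro h
  apply hb
  have := congrArg List.length h
  rw [length_toA] at this
  exact List.eq_nil_of_length_eq_zero (by simpa using this)

/-- The main invariant, proved by induction on length. -/
lemma main_inv : ∀ n : ℕ, ∀ b : List ℕ, b.length = n → IsB b →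
    IsAscSeq (toA b) ∧
    (b ≠ [] → ascN (toA b) + 2 = (Vb b).card ∧
       (toA b).getD (b.length - 1) 0 = rk (Vb b) (b.getD (b.length - 1) 0)) := by
  intro n
  induction n with
  | zero =>
    intro b hb _
    have : b = [] := List.eq_nil_of_length_eq_zero hb
    subst this
    exact ⟨ascSeq_nil, fun h => absurd rfl h⟩
  | succ n ih =>
    intro b hb hB
    obtain ⟨c, x, rfl⟩ : ∃ c x, b = c ++ [x] := by
      rcases List.eq_nil_or_concat b with h | ⟨c, x, h⟩
      · rw [h] at hb; simp at hb
      · exact ⟨c, x, by rw [h, List.concat_eq_append]⟩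
    obtain ⟨hBc, hxV⟩ := (isB_concat_iff c x).1 hB
    have hclen : c.length = n := by simpa using hb
    have htoA := toA_concat c x
    by_cases hc0 : c = []
    · subst hc0
      have hx0 : x = 0 := mem_Vb_nil.1 hxV
      subst hx0
      have h1 : toA ([] ++ [0]) = [0] := by
        rw [htoA, toA_nil, rk_zero]
        rfl
      rw [h1]
      refine ⟨ascSeq_single_zero, fun _ => ⟨?_, ?_⟩⟩
      · have : ([] ++ [0] : List ℕ) = [0] := rfl
        rw [this, ascN_single]
        have : (Vb [0]).card = 2 := by decide
        omega
      · decide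
    · obtain ⟨hAc, hrest⟩ := ih c hclen hBc
      obtain ⟨hcard, hlast⟩ := hrest hc0
      set r := rk (Vb c) x with hr
      have hrlt : r < (Vb c).card := rk_lt_card hxV
      have hAb : IsAscSeq (toA (c ++ [x])) := by
        rw [htoA]
        exact (ascSeq_concat_iff (toA c) r (toA_ne_nil hc0)).2 ⟨hAc, by omega⟩
      refine ⟨hAb, fun _ => ?_⟩
      -- last value of c
      obtain ⟨d, y, hdy⟩ : ∃ d y, c = d ++ [y] := by
        rcases List.eq_nil_or_concat c with h | ⟨d, y, h⟩
        · exact absurd h hc0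
        · exact ⟨d, y, by rw [h, List.concat_eq_append]⟩
      have hyget : c.getD (c.length - 1) 0 = y := by
        rw [hdy]
        simp only [List.length_append, List.length_singleton, Nat.add_sub_cancel]
        exact getD_concat_self d y
      have hyV : y ∈ Vb c := by
        rw [hdy]; exact last_mem_Vb d y (by rw [← hdy]; exact hBc)
      -- the ascent count
      have hascN : ascN (toA (c ++ [x]))
          = ascN (toA c) + (if (toA c).getD ((toA c).length - 1) 0 < r then 1 else 0) := by
        rw [htoA]
        exact ascN_concat (toA c) r (toA_ne_nil hc0)
      have hlen_toA : (toA c).length = c.length := length_toA c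
      have hiff : ((toA c).getD ((toA c).length - 1) 0 < r) ↔ (c.getD (c.length - 1) 0 < x) := by
        rw [hlen_toA, hlast, hyget, hr]
        rw [← hyget]
        exact rk_lt_rk_iff hxV (by rw [hyget]; exact hyV)
      have hcard2 := card_Vb_concat c (x := x) hBc hc0
      constructor
      · have hind : (if (toA c).getD ((toA c).length - 1) 0 < r then 1 else 0)
            = (if c.getD (c.length - 1) 0 < x then (1:ℕ) else 0) := by
          simp only [hiff]
        rw [hascN, hind, hcard2]
        split_ifs <;> omega
      · have hL : (c ++ [x]).length - 1 = c.length := by simp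
        rw [hL]
        have e1 : (toA (c ++ [x])).getD c.length 0 = r := by
          rw [htoA, ← hlen_toA]
          exact getD_concat_self (toA c) r
        have e2 : (c ++ [x]).getD c.length 0 = x := getD_concat_self c x
        rw [e1, e2, hr]
        exact (rk_Vb_concat c hBc hxV).symm

lemma toA_injOn : ∀ n : ℕ, ∀ b b' : List ℕ, b.length = n → b'.length = n →
    IsB b → IsB b' → toA b = toA b' → b = b' := by
  intro n
  induction n with
  | zero =>
    intro b b' hb hb' _ _ _
    rw [List.eq_nil_of_length_eq_zero hb, List.eq_nil_of_length_eq_zero hb']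
  | succ n ih =>
    intro b b' hb hb' hB hB' heq
    obtain ⟨c, x, rfl⟩ : ∃ c x, b = c ++ [x] := by
      rcases List.eq_nil_or_concat b with h | ⟨c, x, h⟩
      · rw [h] at hb; simp at hb
      · exact ⟨c, x, by rw [h, List.concat_eq_append]⟩
    obtain ⟨c', x', rfl⟩ : ∃ c x, b' = c ++ [x] := by
      rcases List.eq_nil_or_concat b' with h | ⟨c, x, h⟩
      · rw [h] at hb'; simp at hb'
      · exact ⟨c, x, by rw [h, List.concat_eq_append]⟩
    obtain ⟨hBc, hxV⟩ := (isB_concat_iff c x).1 hB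
    obtain ⟨hBc', hxV'⟩ := (isB_concat_iff c' x').1 hB'
    have hclen : c.length = n := by simpa using hb
    have hclen' : c'.length = n := by simpa using hb'
    rw [toA_concat, toA_concat] at heq
    have hlen2 : (toA c).length = (toA c').length := by
      rw [length_toA, length_toA, hclen, hclen']
    obtain ⟨h1, h2⟩ := List.append_inj heq hlen2
    have hcc : c = c' := ih c c' hclen hclen' hBc hBc' h1
    subst hcc
    have : rk (Vb c) x = rk (Vb c) x' := by
      simpa using h2
    rw [rk_injOn hxV hxV' this]

lemma toA_surjOn : ∀ n : ℕ, ∀ s : List ℕ, s.length = n → IsAscSeq s →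
    ∃ b, IsB b ∧ b.length = n ∧ toA b = s := by
  intro n
  induction n with
  | zero =>
    intro s hs _
    exact ⟨[], isB_nil, rfl, by rw [List.eq_nil_of_length_eq_zero hs, toA_nil]⟩
  | succ n ih =>
    intro s hs hA
    obtain ⟨t, y, rfl⟩ : ∃ t y, s = t ++ [y] := by
      rcases List.eq_nil_or_concat s with h | ⟨t, y, h⟩
      · rw [h] at hs; simp at hs
      · exact ⟨t, y, by rw [h, List.concat_eq_append]⟩
    have htlen : t.length = n := by simpa using hs
    by_cases ht0 : t = []
    · subst ht0
      have hy0 : y = 0 := by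
        have := hA.1 0 (by simp)
        simpa using this
      subst hy0
      refine ⟨[0], ?_, by simpa using htlen.symm ▸ rfl, ?_⟩
      · constructor
        · intro i hi
          simp at hi
          subst hi; simp
        · intro k hk; simp at hk
      · have : ([0] : List ℕ) = [] ++ [0] := rfl
        rw [this, toA_concat, toA_nil, rk_zero]
        rfl
    · obtain ⟨hAt, hy⟩ := (ascSeq_concat_iff t y ht0).1 hA
      obtain ⟨c, hBc, hclen, htc⟩ := ih t htlen hAt
      have hc0 : c ≠ [] := by
        intro h
        apply ht0
        rw [← htc, h, toA_nil]
      obtain ⟨-, hrest⟩ := main_inv n c hclen hBc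
      obtain ⟨hcard, -⟩ := hrest hc0
      rw [htc] at hcard
      obtain ⟨x, hxV, hxr⟩ := rk_surjOn (V := Vb c) (r := y) (by omega)
      refine ⟨c ++ [x], (isB_concat_iff c x).2 ⟨hBc, hxV⟩, by simp [hclen], ?_⟩
      rw [toA_concat, htc, hxr]

end BAsc

/-- `|B_n|` equals the number of ascent sequences of length `n`. -/
theorem B_card_eq_ascent_card (n : ℕ) :
    {b : List ℕ | IsB b ∧ b.length = n}.ncard = (AscSeqs n).ncard := by
  have himg : BAsc.toA '' {b : List ℕ | IsB b ∧ b.length = n} = AscSeqs n := by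
    ext s
    constructor
    · rintro ⟨b, ⟨hB, hlen⟩, rfl⟩
      exact ⟨(BAsc.main_inv n b hlen hB).1, by rw [BAsc.length_toA]; exact hlen⟩
    · rintro ⟨hA, hlen⟩
      obtain ⟨b, hB, hblen, rfl⟩ := BAsc.toA_surjOn n s hlen hA
      exact ⟨b, ⟨hB, hblen⟩, rfl⟩
  rw [← himg]
  rw [Set.ncard_image_of_injOn]
  intro b hb b' hb' heq
  exact BAsc.toA_injOn n b b' hb.2 hb'.2 hb.1 hb'.1 heq
end

section
/- Define C_n as the set of inversion sequences c of length n such that whenever c_i ≥ c_{i+1}, the value i does not occur among c_{i+1},...,c_n. Then there is a bijection γ from C_n to the set A_n of ascent sequences of length n preserving the four set-valued statistics ASC (positions of ascents), DIST (positions of last occurrences of distinct positive entries), ZERO (positions of zeros) and RMIN (positions of right-to-left minima). In particular, |C_n| equals the number of ascent sequences of length n. -/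
/-- Membership in `C_n` (0-indexed): an inversion sequence `c` such that whenever
`c k ≥ c (k+1)`, the value `k+1` does not occur among the later entries. -/
def IsC (c : List ℕ) : Prop :=
  IsInvSeq c ∧ ∀ k, k + 1 < c.length → c.getD (k+1) 0 ≤ c.getD k 0 →
    ∀ m, k < m → m < c.length → c.getD m 0 ≠ k + 1

/-- Positions (0-indexed) of ascents. -/
def ASCset (s : List ℕ) : Finset ℕ :=
  (Finset.range (s.length - 1)).filter fun i => s.getD i 0 < s.getD (i+1) 0

/-- Positions (0-indexed) of last occurrences of distinct positive entries. -/
def DISTset (s : List ℕ) : Finset ℕ :=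
  (Finset.range s.length).filter fun i =>
    1 ≤ i ∧ s.getD i 0 ≠ 0 ∧ ∀ j ∈ Finset.range s.length, i < j → s.getD i 0 ≠ s.getD j 0

/-- Positions (0-indexed) of zeros. -/
def ZEROset (s : List ℕ) : Finset ℕ :=
  (Finset.range s.length).filter fun i => s.getD i 0 = 0

/-- Positions (0-indexed) of right-to-left minima. -/
def RMINset (s : List ℕ) : Finset ℕ :=
  (Finset.range s.length).filter fun i =>
    ∀ j ∈ Finset.range s.length, i < j → s.getD i 0 < s.getD j 0

namespace GammaAux

def goodP (c : List ℕ) (y : ℕ) : Prop := y = 0 ∨ c.getD (y-1) 0 < c.getD y 0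

instance (c : List ℕ) (y : ℕ) : Decidable (goodP c y) := by
  unfold goodP; exact inferInstance

def rk (c : List ℕ) (x : ℕ) : ℕ := ((Finset.range x).filter (goodP c)).card

def gam (c : List ℕ) : List ℕ := c.map (rk c)

lemma length_gam (c : List ℕ) : (gam c).length = c.length := List.length_map _

lemma getD_gam {c : List ℕ} {i : ℕ} (h : i < c.length) :
    (gam c).getD i 0 = rk c (c.getD i 0) := by
  have h' : i < (gam c).length := by simpa [length_gam] using h
  rw [List.getD_eq_getElem _ _ h', List.getD_eq_getElem _ _ h]
  simp [gam]

lemma rk_mono (c : List ℕ) {x x' : ℕ} (h : x ≤ x') : rk c x ≤ rk c x' :=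
  Finset.card_le_card (Finset.filter_subset_filter _ (Finset.range_subset_range.2 h))

lemma rk_strict (c : List ℕ) {y x : ℕ} (hg : goodP c y) (h : y < x) :
    rk c y < rk c x := by
  apply Finset.card_lt_card
  constructor
  · exact Finset.filter_subset_filter _ (Finset.range_subset_range.2 (le_of_lt h))
  · intro hsub
    have : y ∈ (Finset.range x).filter (goodP c) := Finset.mem_filter.2 ⟨Finset.mem_range.2 h, hg⟩
    have := hsub this
    simp [Finset.mem_filter] at this

lemma rk_le (c : List ℕ) (x : ℕ) : rk c x ≤ x :=
  le_trans (Finset.card_filter_le _ _) (le_of_eq (Finset.card_range x))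

lemma rk_zero (c : List ℕ) : rk c 0 = 0 := by simp [rk]

lemma rk_pos (c : List ℕ) {x : ℕ} (h : 1 ≤ x) : 0 < rk c x := by
  have := rk_strict c (y := 0) (Or.inl rfl) h
  simpa [rk_zero] using this

lemma good_entry {c : List ℕ} (hc : IsC c) {i : ℕ} (h : i < c.length) :
    goodP c (c.getD i 0) := by
  by_cases h0 : c.getD i 0 = 0
  · exact Or.inl h0
  · right
    by_contra hlt
    push_neg at hlt
    set y := c.getD i 0 with hy
    have hy1 : 1 ≤ y := Nat.one_le_iff_ne_zero.2 h0
    have hyi : y ≤ i := hc.1 i h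
    have hkey := hc.2 (y - 1) (by omega : y - 1 + 1 < c.length) ?_ i (by omega) h
    · rw [show y - 1 + 1 = y by omega] at hkey
      exact hkey hy.symm
    · rw [show y - 1 + 1 = y by omega]
      exact hlt

lemma lt_iff {c : List ℕ} (hc : IsC c) {i j : ℕ} (hi : i < c.length) (hj : j < c.length) :
    c.getD i 0 < c.getD j 0 ↔ (gam c).getD i 0 < (gam c).getD j 0 := by
  rw [getD_gam hi, getD_gam hj]
  constructor
  · exact fun h => rk_strict c (good_entry hc hi) h
  · intro h
    by_contra hle
    push_neg at hle
    exact absurd (rk_mono c hle) (by omega)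

lemma eq_iff {c : List ℕ} (hc : IsC c) {i j : ℕ} (hi : i < c.length) (hj : j < c.length) :
    c.getD i 0 = c.getD j 0 ↔ (gam c).getD i 0 = (gam c).getD j 0 := by
  constructor
  · intro h; rw [getD_gam hi, getD_gam hj, h]
  · intro h
    rcases lt_trichotomy (c.getD i 0) (c.getD j 0) with hlt | he | hgt
    · exact absurd ((lt_iff hc hi hj).1 hlt) (by omega)
    · exact he
    · exact absurd ((lt_iff hc hj hi).1 hgt) (by omega)

lemma zero_iff {c : List ℕ} {i : ℕ} (hi : i < c.length) :
    c.getD i 0 = 0 ↔ (gam c).getD i 0 = 0 := by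
  rw [getD_gam hi]
  constructor
  · intro h; rw [h, rk_zero]
  · intro h
    by_contra h0
    exact absurd (rk_pos c (Nat.one_le_iff_ne_zero.2 h0)) (by omega)

lemma getD_take {c : List ℕ} {i j : ℕ} (h : j < i) :
    (c.take i).getD j 0 = c.getD j 0 := by
  by_cases hl : j < c.length
  · have h1 : j < (c.take i).length := by simp [List.length_take]; omega
    rw [List.getD_eq_getElem _ _ h1, List.getD_eq_getElem _ _ hl]
    simp [List.getElem_take]
  · push_neg at hl
    rw [List.getD_eq_default _ _ hl, List.getD_eq_default]
    simp [List.length_take]; omega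

lemma rk_length_eq {c : List ℕ} {i : ℕ} (h1 : 1 ≤ i) (h2 : i ≤ c.length) :
    rk c i = ascN (c.take i) + 1 := by
  have hlen : (c.take i).length = i := by simp [List.length_take]; omega
  have hasc : ascN (c.take i) =
      ((Finset.range (i-1)).filter fun j => c.getD j 0 < c.getD (j+1) 0).card := by
    unfold ascN
    rw [hlen]
    congr 1
    apply Finset.filter_congr
    intro j hj
    rw [Finset.mem_range] at hj
    rw [getD_take (by omega), getD_take (by omega)]
  rw [hasc]
  unfold rk
  have hset : (Finset.range i).filter (goodP c) =
      insert 0 (((Finset.range (i-1)).filter fun j => c.getD j 0 < c.getD (j+1) 0).image (· + 1)) := by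
    ext y
    simp only [Finset.mem_filter, Finset.mem_range, Finset.mem_insert, Finset.mem_image, goodP]
    constructor
    · rintro ⟨hy, (rfl | hp)⟩
      · exact Or.inl rfl
      · rcases Nat.eq_zero_or_pos y with h | h
        · exact Or.inl h
        · right
          refine ⟨y - 1, ⟨by omega, ?_⟩, by omega⟩
          rw [show y - 1 + 1 = y by omega]; exact hp
    · rintro (rfl | ⟨j, ⟨hj, hp⟩, rfl⟩)
      · exact ⟨by omega, Or.inl rfl⟩
      · exact ⟨by omega, Or.inr (by simpa using hp)⟩
  rw [hset, Finset.card_insert_of_notMem (by simp), Finset.card_image_of_injective _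
    (add_left_injective 1)]
lemma goodP_congr {c c' : List ℕ} {i y : ℕ}
    (h : ∀ j < i, c.getD j 0 = c'.getD j 0) (hy : y < i) :
    goodP c y ↔ goodP c' y := by
  unfold goodP
  rw [h y hy, h (y-1) (by omega)]

lemma rk_congr {c c' : List ℕ} {i x : ℕ}
    (h : ∀ j < i, c.getD j 0 = c'.getD j 0) (hx : x ≤ i) :
    rk c x = rk c' x := by
  unfold rk
  congr 1
  apply Finset.filter_congr
  intro y hy
  rw [Finset.mem_range] at hy
  simp only [goodP_congr h (by omega : y < i)]

/-- `ascN` of a prefix is preserved by `gam`. -/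
lemma ascN_take_gam {c : List ℕ} (hc : IsC c) {i : ℕ} (hi : i ≤ c.length) :
    ascN ((gam c).take i) = ascN (c.take i) := by
  unfold ascN
  have h1 : ((gam c).take i).length = i := by simp [List.length_take, length_gam]; omega
  have h2 : (c.take i).length = i := by simp [List.length_take]; omega
  rw [h1, h2]
  congr 1
  apply Finset.filter_congr
  intro j hj
  rw [Finset.mem_range] at hj
  rw [getD_take (by omega), getD_take (by omega), getD_take (by omega), getD_take (by omega)]
  exact (lt_iff hc (by omega) (by omega)).symm

lemma ascN_gam {c : List ℕ} (hc : IsC c) : ascN (gam c) = ascN c := by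
  have := ascN_take_gam hc (i := c.length) le_rfl
  rwa [List.take_length, show c.length = (gam c).length from (length_gam c).symm,
    List.take_length] at this

lemma gam_isAsc {c : List ℕ} (hc : IsC c) : IsAscSeq (gam c) := by
  constructor
  · intro i hi
    rw [length_gam] at hi
    rw [getD_gam hi]
    exact le_trans (rk_le c _) (hc.1 i hi)
  · intro i hi
    rw [length_gam] at hi
    rw [getD_gam hi]
    rcases Nat.eq_zero_or_pos i with h0 | h0
    · subst h0
      have : c.getD 0 0 = 0 := Nat.le_zero.1 (hc.1 0 hi)
      rw [this, rk_zero]; omega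
    · have h1 : rk c (c.getD i 0) ≤ rk c i := rk_mono c (hc.1 i hi)
      have h2 : rk c i = ascN (c.take i) + 1 := rk_length_eq h0 (le_of_lt hi)
      rw [ascN_take_gam hc (le_of_lt hi)]
      omega

lemma gam_inj {c c' : List ℕ} (hc : IsC c) (hc' : IsC c')
    (hlen : c.length = c'.length) (h : gam c = gam c') : c = c' := by
  have key : ∀ i, i < c.length → c.getD i 0 = c'.getD i 0 := by
    intro i
    induction i using Nat.strong_induction_on with
    | _ i ih =>
      intro hi
      have hi' : i < c'.length := by omega
      have hpre : ∀ j < i, c.getD j 0 = c'.getD j 0 := fun j hj => ih j hj (by omega)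
      have hgi : rk c (c.getD i 0) = rk c' (c'.getD i 0) := by
        rw [← getD_gam hi, ← getD_gam hi', h]
      rcases lt_trichotomy (c.getD i 0) (c'.getD i 0) with hlt | he | hgt
      · exfalso
        have hle : c.getD i 0 < i + 1 := by have := hc'.1 i hi'; omega
        have hgood : goodP c' (c.getD i 0) := by
          rw [← goodP_congr hpre (by have := hc'.1 i hi'; omega)]
          exact good_entry hc hi
        have h1 : rk c' (c.getD i 0) < rk c' (c'.getD i 0) := rk_strict c' hgood hlt
        have h2 : rk c (c.getD i 0) = rk c' (c.getD i 0) :=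
          rk_congr hpre (by have := hc'.1 i hi'; omega)
        omega
      · exact he
      · exfalso
        have hgood : goodP c (c'.getD i 0) := by
          rw [goodP_congr hpre (by have := hc.1 i hi; omega)]
          exact good_entry hc' hi'
        have h1 : rk c (c'.getD i 0) < rk c (c.getD i 0) := rk_strict c hgood hgt
        have h2 : rk c (c'.getD i 0) = rk c' (c'.getD i 0) :=
          rk_congr hpre (by have := hc.1 i hi; omega)
        omega
  apply List.ext_getElem hlen
  intro i h1 h2
  have := key i h1
  rwa [List.getD_eq_getElem _ _ h1, List.getD_eq_getElem _ _ h2] at this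
lemma isAsc_of_append {b : List ℕ} {x : ℕ} (h : IsAscSeq (b ++ [x])) : IsAscSeq b := by
  constructor
  · intro i hi
    have := h.1 i (by simp; omega)
    rwa [List.getD_append _ _ _ _ hi] at this
  · intro i hi
    have := h.2 i (by simp; omega)
    rwa [List.getD_append _ _ _ _ hi,
      List.take_append_of_le_length (by omega : i ≤ b.length)] at this

lemma last_of_append {b : List ℕ} {x : ℕ} (h : IsAscSeq (b ++ [x])) :
    x ≤ b.length ∧ x ≤ ascN b + 1 := by
  have hlen : b.length < (b ++ [x]).length := by simp
  have hx : (b ++ [x]).getD b.length 0 = x := by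
    rw [List.getD_append_right _ _ _ _ le_rfl]
    simp
  constructor
  · have := h.1 b.length hlen
    rwa [hx] at this
  · have := h.2 b.length hlen
    rwa [hx, List.take_append_of_le_length le_rfl, List.take_length] at this

lemma gam_surj : ∀ a : List ℕ, IsAscSeq a → ∃ c, IsC c ∧ c.length = a.length ∧ gam c = a := by
  intro a
  induction a using List.reverseRecOn with
  | nil =>
    intro _
    exact ⟨[], ⟨fun i hi => by simp at hi, fun k hk => by simp at hk⟩, by simp, by simp [gam]⟩
  | append_singleton b x ih =>
    intro ha
    obtain ⟨c, hc, hclen, hgam⟩ := ih (isAsc_of_append ha)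
    obtain ⟨hx1, hx2⟩ := last_of_append ha
    set i := c.length with hi
    have hlenb : b.length = i := hclen.symm
    have hascbc : ascN b = ascN c := by rw [← hgam, ascN_gam hc]
    -- find x' with rk c x' = x among the allowed set S
    have hex : ∃ x', x' < i + 1 ∧ (x' = 0 ∨ x' = i ∨ c.getD (x'-1) 0 < c.getD x' 0) ∧
        rk c x' = x := by
      rcases Nat.eq_zero_or_pos i with h0 | h0
      · refine ⟨0, by omega, Or.inl rfl, ?_⟩
        rw [rk_zero]
        omega
      · set S : Finset ℕ := (Finset.range (i+1)).filter
          (fun x' => x' = 0 ∨ x' = i ∨ c.getD (x'-1) 0 < c.getD x' 0) with hS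
        have hSeq : S = insert i ((Finset.range i).filter (goodP c)) := by
          ext y
          simp only [hS, Finset.mem_filter, Finset.mem_range, Finset.mem_insert, goodP]
          constructor
          · rintro ⟨hy, (rfl | rfl | hp)⟩
            · exact Or.inr ⟨h0, Or.inl rfl⟩
            · exact Or.inl rfl
            · rcases Nat.lt_or_ge y i with h | h
              · exact Or.inr ⟨h, Or.inr hp⟩
              · left; omega
          · rintro (rfl | ⟨hy, (rfl | hp)⟩)
            · exact ⟨by omega, Or.inr (Or.inl rfl)⟩
            · exact ⟨by omega, Or.inl rfl⟩
            · exact ⟨by omega, Or.inr (Or.inr hp)⟩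
        have hScard : S.card = ascN c + 2 := by
          rw [hSeq, Finset.card_insert_of_notMem (by simp)]
          have : ((Finset.range i).filter (goodP c)).card = rk c i := rfl
          rw [this, rk_length_eq h0 le_rfl, List.take_length]
        have hrki : rk c i = ascN c + 1 := by
          have := rk_length_eq h0 (le_refl i)
          rwa [List.take_length] at this
        have hbound : ∀ y ∈ S, rk c y < ascN c + 2 := by
          intro y hy
          rw [hS, Finset.mem_filter, Finset.mem_range] at hy
          have := rk_mono c (by omega : y ≤ i)
          omega
        have hinjS : Set.InjOn (rk c) S := by
          intro y hy z hz hrk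
          rw [hSeq] at hy hz
          simp only [Finset.coe_insert, Set.mem_insert_iff, Finset.mem_coe,
            Finset.mem_filter, Finset.mem_range] at hy hz
          by_contra hne
          rcases Nat.lt_or_ge y z with h | h
          · have hgy : goodP c y := by
              rcases hy with rfl | ⟨hy1, hy2⟩
              · exfalso; rcases hz with rfl | ⟨hz1, _⟩ <;> omega
              · exact hy2
            have := rk_strict c hgy h
            omega
          · have hlt : z < y := by omega
            have hgz : goodP c z := by
              rcases hz with rfl | ⟨hz1, hz2⟩
              · exfalso; rcases hy with rfl | ⟨hy1, _⟩ <;> omega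
              · exact hz2
            have := rk_strict c hgz hlt
            omega
        have himg : S.image (rk c) = Finset.range (ascN c + 2) := by
          apply Finset.eq_of_subset_of_card_le
          · intro y hy
            rw [Finset.mem_image] at hy
            obtain ⟨z, hz, rfl⟩ := hy
            rw [Finset.mem_range]
            exact hbound z hz
          · rw [Finset.card_range, Finset.card_image_of_injOn hinjS, hScard]
        have hxmem : x ∈ S.image (rk c) := by
          rw [himg, Finset.mem_range]
          omega
        rw [Finset.mem_image] at hxmem
        obtain ⟨x', hx', hrkx⟩ := hxmem
        rw [hS, Finset.mem_filter, Finset.mem_range] at hx'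
        exact ⟨x', hx'.1, hx'.2, hrkx⟩
    obtain ⟨x', hx'lt, hx'P, hx'rk⟩ := hex
    refine ⟨c ++ [x'], ?_, by simp [hlenb]; omega, ?_⟩
    · -- IsC (c ++ [x'])
      have hget : ∀ j < i, (c ++ [x']).getD j 0 = c.getD j 0 :=
        fun j hj => List.getD_append _ _ _ _ hj
      have hgetl : (c ++ [x']).getD i 0 = x' := by
        rw [List.getD_append_right _ _ _ _ le_rfl]; simp
      constructor
      · intro j hj
        simp only [List.length_append, List.length_singleton] at hj
        rcases Nat.lt_or_ge j i with h | h
        · rw [hget j h]; exact hc.1 j h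
        · have : j = i := by omega
          subst this
          rw [hgetl]; omega
      · intro k hk hle m hkm hm
        simp only [List.length_append, List.length_singleton] at hk hm
        rcases Nat.lt_or_ge m i with hmi | hmi
        · -- m < i : use hc.2 ; need k + 1 < i
          have hk1 : k + 1 < i := by omega
          rw [hget m hmi]
          rw [hget (k+1) hk1, hget k (by omega)] at hle
          exact hc.2 k hk1 hle m hkm hmi
        · have hm_eq : m = i := by omega
          subst hm_eq
          rw [hgetl]
          rcases Nat.lt_or_ge (k+1) i with hki | hki
          · rw [hget (k+1) hki, hget k (by omega)] at hle
            rcases hx'P with rfl | rfl | hp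
            · omega
            · omega
            · intro heq
              rw [heq, Nat.add_sub_cancel] at hp
              omega
          · -- k + 1 = i
            have hk1 : k + 1 = i := by omega
            rw [hk1, hgetl, hget k (by omega)] at hle
            have hck : c.getD k 0 ≤ k := hc.1 k (by omega)
            omega
    · -- gam (c ++ [x']) = b ++ [x]
      have hget : ∀ j < i, (c ++ [x']).getD j 0 = c.getD j 0 :=
        fun j hj => List.getD_append _ _ _ _ hj
      have hrk_eq : ∀ z ≤ i, rk (c ++ [x']) z = rk c z := by
        intro z hz
        exact rk_congr (c := c ++ [x']) (c' := c) (i := i) hget hz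
      have hmap : c.map (rk (c ++ [x'])) = c.map (rk c) := by
        apply List.map_congr_left
        intro z hz
        rw [List.mem_iff_getElem] at hz
        obtain ⟨j, hj, rfl⟩ := hz
        rw [← List.getD_eq_getElem c 0 hj]
        exact hrk_eq _ (le_trans (hc.1 j hj) (by omega))
      unfold gam
      rw [List.map_append, hmap]
      have : List.map (rk (c ++ [x'])) [x'] = [x] := by
        simp only [List.map_singleton]
        rw [hrk_eq x' (by omega), hx'rk]
      rw [this, ← hgam]
      rfl
lemma ASC_gam {c : List ℕ} (hc : IsC c) : ASCset (gam c) = ASCset c := by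
  unfold ASCset
  rw [length_gam]
  apply Finset.filter_congr
  intro i hi
  rw [Finset.mem_range] at hi
  exact (lt_iff hc (by omega) (by omega)).symm

lemma ZERO_gam {c : List ℕ} (hc : IsC c) : ZEROset (gam c) = ZEROset c := by
  unfold ZEROset
  rw [length_gam]
  apply Finset.filter_congr
  intro i hi
  rw [Finset.mem_range] at hi
  exact (zero_iff hi).symm

lemma DIST_gam {c : List ℕ} (hc : IsC c) : DISTset (gam c) = DISTset c := by
  unfold DISTset
  rw [length_gam]
  apply Finset.filter_congr
  intro i hi
  rw [Finset.mem_range] at hi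
  constructor
  · rintro ⟨h1, h2, h3⟩
    refine ⟨h1, fun h => h2 ((zero_iff hi).1 h), fun j hj hij heq => ?_⟩
    rw [Finset.mem_range] at hj
    exact h3 j (Finset.mem_range.2 hj) hij ((eq_iff hc hi hj).1 heq)
  · rintro ⟨h1, h2, h3⟩
    refine ⟨h1, fun h => h2 ((zero_iff hi).2 h), fun j hj hij heq => ?_⟩
    rw [Finset.mem_range] at hj
    exact h3 j (Finset.mem_range.2 hj) hij ((eq_iff hc hi hj).2 heq)

lemma RMIN_gam {c : List ℕ} (hc : IsC c) : RMINset (gam c) = RMINset c := by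
  unfold RMINset
  rw [length_gam]
  apply Finset.filter_congr
  intro i hi
  rw [Finset.mem_range] at hi
  constructor
  · intro h j hj hij
    rw [Finset.mem_range] at hj
    exact (lt_iff hc hi hj).2 (h j (Finset.mem_range.2 hj) hij)
  · intro h j hj hij
    rw [Finset.mem_range] at hj
    exact (lt_iff hc hi hj).1 (h j (Finset.mem_range.2 hj) hij)

end GammaAux

/-- There is a bijection `γ : C_n → A_n` preserving the set-valued statistics
`ASC`, `DIST`, `ZERO` and `RMIN`; in particular `|C_n| = |A_n|`. -/
theorem gamma_bijection (n : ℕ) :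
    (∃ γ : List ℕ → List ℕ,
      Set.BijOn γ {c | IsC c ∧ c.length = n} (AscSeqs n) ∧
      ∀ c, IsC c → c.length = n →
        ASCset (γ c) = ASCset c ∧ DISTset (γ c) = DISTset c ∧
        ZEROset (γ c) = ZEROset c ∧ RMINset (γ c) = RMINset c) ∧
    {c : List ℕ | IsC c ∧ c.length = n}.ncard = (AscSeqs n).ncard := by
    open GammaAux in
  have hmaps : Set.MapsTo gam {c | IsC c ∧ c.length = n} (AscSeqs n) := by
    rintro c ⟨hc, hlen⟩
    exact ⟨gam_isAsc hc, by rw [length_gam, hlen]⟩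
  have hinj : Set.InjOn gam {c | IsC c ∧ c.length = n} := by
    rintro c ⟨hc, hlen⟩ c' ⟨hc', hlen'⟩ h
    exact gam_inj hc hc' (by omega) h
  have hsurj : Set.SurjOn gam {c | IsC c ∧ c.length = n} (AscSeqs n) := by
    rintro a ⟨ha, hlen⟩
    obtain ⟨c, hc, hclen, hgam⟩ := gam_surj a ha
    exact ⟨c, ⟨hc, by omega⟩, hgam⟩
  have hbij : Set.BijOn gam {c | IsC c ∧ c.length = n} (AscSeqs n) := ⟨hmaps, hinj, hsurj⟩
  constructor
  · exact ⟨gam, hbij, fun c hc _ => ⟨ASC_gam hc, DIST_gam hc, ZERO_gam hc, RMIN_gam hc⟩⟩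
  · rw [← hbij.image_eq]
    exact (Set.ncard_image_of_injOn hinj).symm
end
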